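/- Let N ≥ 2 and let Γ be the path algebra of the quiver with vertices 1,…,N, degree-1 arrows xᵢ: i → i+1, xᵢ*: i+1 → i (1 ≤ i ≤ N−1) and degree-N arrows yᵢ: i → N+1−i (1 ≤ i ≤ N), modulo the relations (a) x₁x₁* = x_{N-1}*x_{N-1} = 0, (b) xᵢ*xᵢ = x_{i+1}x_{i+1}*, (c) xᵢ y_{i+1} = yᵢ x_{N-i}*, (d) xᵢ* yᵢ = y_{i+1} x_{N-i}. Then every element of e_i Γ e_j homogeneous of degree k can be written as yᵢᵃ·γ₁·γ₂ where a ∈ {0,1}, γ₁ is a product of xₗ's and xₗ*'s only, and γ₂ is a product of yₗ's forming a loop at j (of degree a multiple of 2N). -/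

import Mathlib

/-! The graded path algebra `Γ` of the quiver with vertices `1, …, N`, degree-1 arrows
`xᵢ : i → i+1`, `xᵢ* : i+1 → i` and degree-`N` arrows `yᵢ : i → N+1−i`, modulo
(a) `x₁x₁* = x_{N-1}*x_{N-1} = 0`, (b) `xᵢ*xᵢ = x_{i+1}x_{i+1}*`,
(c) `xᵢ y_{i+1} = yᵢ x_{N-i}*`, (d) `xᵢ* yᵢ = y_{i+1} x_{N-i}`
(concatenation-of-paths convention). -/

/-- A step of a path: `up` is some `x`, `down` is some `x*`, `flip` is some `y`. -/
inductive BStep : Type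
  | up : BStep
  | down : BStep
  | flip : BStep
deriving DecidableEq

/-- The endpoint of a single step starting at vertex `v`. -/
def stepNext (N : ℕ) (v : ℤ) : BStep → ℤ
  | BStep.up => v + 1
  | BStep.down => v - 1
  | BStep.flip => (N : ℤ) + 1 - v

/-- The degree of a step: `x` and `x*` have degree `1`, `y` has degree `N`. -/
def stepDeg (N : ℕ) : BStep → ℕ
  | BStep.up => 1
  | BStep.down => 1
  | BStep.flip => N

/-- All vertices visited lie in `{1, …, N}`. -/
def okStepsY (N : ℕ) : ℤ → List BStep → Prop
  | i, [] => 1 ≤ i ∧ i ≤ (N : ℤ)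
  | i, b :: L => 1 ≤ i ∧ i ≤ (N : ℤ) ∧ okStepsY N (stepNext N i b) L

/-- The endpoint of the step list `L` starting at `i`. -/
def targetY (N : ℕ) : ℤ → List BStep → ℤ
  | i, [] => i
  | i, b :: L => targetY N (stepNext N i b) L

/-- The total degree of a step list. -/
def degY (N : ℕ) (L : List BStep) : ℕ := (L.map (stepDeg N)).sum

/-- `L` encodes a path from `i` to `j` of total degree `k`. -/
def IsPathFromY (N : ℕ) (i j : ℤ) (k : ℕ) (L : List BStep) : Prop :=
  okStepsY N i L ∧ targetY N i L = j ∧ degY N L = k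

/-- The set of paths from `i` to `j` of degree `k`. -/
def PathIdxY (N : ℕ) (i j : ℤ) (k : ℕ) : Type :=
  {L : List BStep // IsPathFromY N i j k L}

/-- The relators spanning the degree-`k`, `(i,j)`-component of the ideal generated by
the relations (a)–(d) inside `e_i (FQ)_k e_j`. -/
def relatorsY (F : Type*) [Field F] (N : ℕ) (i j : ℤ) (k : ℕ) :
    Set (PathIdxY N i j k →₀ F) :=
  {v | ∃ A B : List BStep,
    -- (a) `x₁x₁* = 0`
    (∃ h : IsPathFromY N i j k (A ++ [BStep.up, BStep.down] ++ B),
      targetY N i A = 1 ∧ v = Finsupp.single ⟨A ++ [BStep.up, BStep.down] ++ B, h⟩ 1) ∨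
    -- (a) `x_{N-1}*x_{N-1} = 0`
    (∃ h : IsPathFromY N i j k (A ++ [BStep.down, BStep.up] ++ B),
      targetY N i A = (N : ℤ) ∧
      v = Finsupp.single ⟨A ++ [BStep.down, BStep.up] ++ B, h⟩ 1) ∨
    -- (b) `xᵢ*xᵢ = x_{i+1}x_{i+1}*` at an interior vertex
    (∃ (h1 : IsPathFromY N i j k (A ++ [BStep.down, BStep.up] ++ B))
        (h2 : IsPathFromY N i j k (A ++ [BStep.up, BStep.down] ++ B)),
      2 ≤ targetY N i A ∧ targetY N i A ≤ (N : ℤ) - 1 ∧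
      v = Finsupp.single ⟨A ++ [BStep.down, BStep.up] ++ B, h1⟩ 1
          - Finsupp.single ⟨A ++ [BStep.up, BStep.down] ++ B, h2⟩ 1) ∨
    -- (c) `xᵢ y_{i+1} = yᵢ x_{N-i}*`
    (∃ (h1 : IsPathFromY N i j k (A ++ [BStep.up, BStep.flip] ++ B))
        (h2 : IsPathFromY N i j k (A ++ [BStep.flip, BStep.down] ++ B)),
      1 ≤ targetY N i A ∧ targetY N i A ≤ (N : ℤ) - 1 ∧
      v = Finsupp.single ⟨A ++ [BStep.up, BStep.flip] ++ B, h1⟩ 1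
          - Finsupp.single ⟨A ++ [BStep.flip, BStep.down] ++ B, h2⟩ 1) ∨
    -- (d) `xᵢ* yᵢ = y_{i+1} x_{N-i}`
    (∃ (h1 : IsPathFromY N i j k (A ++ [BStep.down, BStep.flip] ++ B))
        (h2 : IsPathFromY N i j k (A ++ [BStep.flip, BStep.up] ++ B)),
      2 ≤ targetY N i A ∧ targetY N i A ≤ (N : ℤ) ∧
      v = Finsupp.single ⟨A ++ [BStep.down, BStep.flip] ++ B, h1⟩ 1
          - Finsupp.single ⟨A ++ [BStep.flip, BStep.up] ++ B, h2⟩ 1)}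

/-- The component `e_i Γ_k e_j` of the quotient graded path algebra `Γ = FQ/⟨I⟩`. -/
def PathCompY (F : Type*) [Field F] (N : ℕ) (i j : ℤ) (k : ℕ) :=
  (PathIdxY N i j k →₀ F) ⧸ Submodule.span F (relatorsY F N i j k)

noncomputable instance (F : Type*) [Field F] (N : ℕ) (i j : ℤ) (k : ℕ) :
    AddCommGroup (PathCompY F N i j k) :=
  Submodule.Quotient.addCommGroup _

noncomputable instance (F : Type*) [Field F] (N : ℕ) (i j : ℤ) (k : ℕ) :
    Module F (PathCompY F N i j k) :=
  Submodule.Quotient.module _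

/-- The class of a path in `e_i Γ_k e_j`. -/
noncomputable def pathClassY (F : Type*) [Field F] {N : ℕ} {i j : ℤ} {k : ℕ}
    (p : PathIdxY N i j k) : PathCompY F N i j k :=
  Submodule.Quotient.mk (Finsupp.single p 1)

/-- Normal form `yᵢᵃ · γ₁ · γ₂`: an optional initial `y`, then a product of `x`'s and
`x*`'s only, then a loop of `y`'s of degree a multiple of `2N`. -/
def NormalFormY (L : List BStep) : Prop :=
  ∃ (a : Bool) (M : List BStep) (t : ℕ),
    L = (cond a [BStep.flip] []) ++ M ++ List.replicate (2 * t) BStep.flip ∧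
      ∀ s ∈ M, s ≠ BStep.flip

namespace Stmt11Aux

/-- conjugation of a step when a flip moves past it -/
def cStep : BStep → BStep
  | BStep.up => BStep.down
  | BStep.down => BStep.up
  | BStep.flip => BStep.flip

lemma cStep_ne_flip {s : BStep} (h : s ≠ BStep.flip) : cStep s ≠ BStep.flip := by
  cases s <;> simp_all [cStep]

lemma cStep_cStep (s : BStep) : cStep (cStep s) = s := by cases s <;> rfl

lemma okStepsY_bounds {N : ℕ} {i : ℤ} {L : List BStep} (h : okStepsY N i L) :
    1 ≤ i ∧ i ≤ (N : ℤ) := by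
  cases L with
  | nil => exact h
  | cons b L => exact ⟨h.1, h.2.1⟩

lemma targetY_append (N : ℕ) (i : ℤ) (A B : List BStep) :
    targetY N i (A ++ B) = targetY N (targetY N i A) B := by
  induction A generalizing i with
  | nil => rfl
  | cons a A ih => simp [targetY, ih]

lemma okStepsY_append (N : ℕ) (i : ℤ) (A B : List BStep) :
    okStepsY N i (A ++ B) ↔ okStepsY N i A ∧ okStepsY N (targetY N i A) B := by
  induction A generalizing i with
  | nil =>
      simp only [List.nil_append, okStepsY, targetY]
      exact ⟨fun h => ⟨okStepsY_bounds h, h⟩, fun h => h.2⟩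
  | cons a A ih =>
      simp only [List.cons_append, okStepsY, targetY, List.append_eq, ih]
      tauto

lemma degY_append (N : ℕ) (A B : List BStep) :
    degY N (A ++ B) = degY N A + degY N B := by
  simp [degY]

lemma pathClassY_eq_of_sub_mem {F : Type*} [Field F] {N : ℕ} {i j : ℤ} {k : ℕ}
    (p q : PathIdxY N i j k)
    (h : Finsupp.single p (1 : F) - Finsupp.single q 1 ∈
      Submodule.span F (relatorsY F N i j k)) :
    pathClassY F p = pathClassY F q :=
  (Submodule.Quotient.eq _).2 h

/-- move a flip one step to the right -/
lemma swap_flip_right (F : Type*) [Field F] {N : ℕ} {i j : ℤ} {k : ℕ}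
    (A B : List BStep) (s : BStep) (hs : s ≠ BStep.flip)
    (h1 : IsPathFromY N i j k (A ++ [BStep.flip, s] ++ B)) :
    ∃ h2 : IsPathFromY N i j k (A ++ [cStep s, BStep.flip] ++ B),
      pathClassY F ⟨_, h1⟩ = pathClassY F (⟨_, h2⟩ : PathIdxY N i j k) := by
  have hok := h1.1
  have htg := h1.2.1
  have hdg := h1.2.2
  rw [List.append_assoc, okStepsY_append] at hok
  rw [List.append_assoc, targetY_append] at htg
  rw [List.append_assoc, degY_append] at hdg
  set v := targetY N i A with hv
  obtain ⟨hA, hrest⟩ := hok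
  cases s with
  | flip => exact absurd rfl hs
  | up =>
    simp only [List.cons_append, List.nil_append, okStepsY, stepNext] at hrest
    obtain ⟨hv1, hv2, hw1, hw2, hB⟩ := hrest
    have hv3 : 2 ≤ v := by have := (okStepsY_bounds hB).2; omega
    have hB' : okStepsY N ((N : ℤ) + 1 - (v - 1)) B := by
      have e : (N : ℤ) + 1 - (v - 1) = (N : ℤ) + 1 - v + 1 := by ring
      rw [e]; exact hB
    simp only [List.cons_append, List.nil_append, targetY, stepNext] at htg
    simp only [degY, List.map_append, List.map_cons, List.map_nil, List.sum_append,
      List.sum_cons, stepDeg] at hdg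
    have h2 : IsPathFromY N i j k (A ++ [BStep.down, BStep.flip] ++ B) := by
      refine ⟨?_, ?_, ?_⟩
      · rw [List.append_assoc, okStepsY_append]
        refine ⟨hA, ?_⟩
        simp only [List.cons_append, List.nil_append, okStepsY, stepNext, ← hv]
        exact ⟨hv1, hv2, by omega, by omega, hB'⟩
      · rw [List.append_assoc, targetY_append]
        simp only [List.cons_append, List.nil_append, targetY, stepNext, ← hv]
        have e : (N : ℤ) + 1 - (v - 1) = (N : ℤ) + 1 - v + 1 := by ring
        rw [e]; exact htg
      · rw [List.append_assoc, degY_append]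
        simp only [degY, List.map_append, List.map_cons, List.map_nil, List.sum_append,
          List.sum_cons, stepDeg]
        omega
    refine ⟨h2, ?_⟩
    apply pathClassY_eq_of_sub_mem
    simp only [cStep]
    have hrel : (Finsupp.single
          (⟨A ++ [BStep.down, BStep.flip] ++ B, h2⟩ : PathIdxY N i j k) (1 : F)
        - Finsupp.single ⟨A ++ [BStep.flip, BStep.up] ++ B, h1⟩ 1)
          ∈ relatorsY F N i j k :=
      ⟨A, B, Or.inr (Or.inr (Or.inr (Or.inr ⟨h2, h1, hv3, hv2, rfl⟩)))⟩
    rw [← neg_sub]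
    exact neg_mem (Submodule.subset_span hrel)
  | down =>
    simp only [List.cons_append, List.nil_append, okStepsY, stepNext] at hrest
    obtain ⟨hv1, hv2, hw1, hw2, hB⟩ := hrest
    have hv3 : v ≤ (N : ℤ) - 1 := by have := (okStepsY_bounds hB).1; omega
    have hB' : okStepsY N ((N : ℤ) + 1 - (v + 1)) B := by
      have e : (N : ℤ) + 1 - (v + 1) = (N : ℤ) + 1 - v - 1 := by ring
      rw [e]; exact hB
    simp only [List.cons_append, List.nil_append, targetY, stepNext] at htg
    simp only [degY, List.map_append, List.map_cons, List.map_nil, List.sum_append,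
      List.sum_cons, stepDeg] at hdg
    have h2 : IsPathFromY N i j k (A ++ [BStep.up, BStep.flip] ++ B) := by
      refine ⟨?_, ?_, ?_⟩
      · rw [List.append_assoc, okStepsY_append]
        refine ⟨hA, ?_⟩
        simp only [List.cons_append, List.nil_append, okStepsY, stepNext, ← hv]
        exact ⟨hv1, hv2, by omega, by omega, hB'⟩
      · rw [List.append_assoc, targetY_append]
        simp only [List.cons_append, List.nil_append, targetY, stepNext, ← hv]
        have e : (N : ℤ) + 1 - (v + 1) = (N : ℤ) + 1 - v - 1 := by ring
        rw [e]; exact htg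
      · rw [List.append_assoc, degY_append]
        simp only [degY, List.map_append, List.map_cons, List.map_nil, List.sum_append,
          List.sum_cons, stepDeg]
        omega
    refine ⟨h2, ?_⟩
    apply pathClassY_eq_of_sub_mem
    simp only [cStep]
    have hrel : (Finsupp.single
          (⟨A ++ [BStep.up, BStep.flip] ++ B, h2⟩ : PathIdxY N i j k) (1 : F)
        - Finsupp.single ⟨A ++ [BStep.flip, BStep.down] ++ B, h1⟩ 1)
          ∈ relatorsY F N i j k :=
      ⟨A, B, Or.inr (Or.inr (Or.inr (Or.inl ⟨h2, h1, hv1, hv3, rfl⟩)))⟩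
    rw [← neg_sub]
    exact neg_mem (Submodule.subset_span hrel)

/-- move a flip one step to the left -/
lemma swap_flip_left (F : Type*) [Field F] {N : ℕ} {i j : ℤ} {k : ℕ}
    (A B : List BStep) (s : BStep) (hs : s ≠ BStep.flip)
    (h1 : IsPathFromY N i j k (A ++ [s, BStep.flip] ++ B)) :
    ∃ h2 : IsPathFromY N i j k (A ++ [BStep.flip, cStep s] ++ B),
      pathClassY F ⟨_, h1⟩ = pathClassY F (⟨_, h2⟩ : PathIdxY N i j k) := by
  have hok := h1.1
  have htg := h1.2.1
  have hdg := h1.2.2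
  rw [List.append_assoc, okStepsY_append] at hok
  rw [List.append_assoc, targetY_append] at htg
  rw [List.append_assoc, degY_append] at hdg
  set v := targetY N i A with hv
  obtain ⟨hA, hrest⟩ := hok
  cases s with
  | flip => exact absurd rfl hs
  | up =>
    simp only [List.cons_append, List.nil_append, okStepsY, stepNext] at hrest
    obtain ⟨hv1, hv2, hw1, hw2, hB⟩ := hrest
    have hB' : okStepsY N ((N : ℤ) + 1 - v - 1) B := by
      have e : (N : ℤ) + 1 - v - 1 = (N : ℤ) + 1 - (v + 1) := by ring
      rw [e]; exact hB
    simp only [List.cons_append, List.nil_append, targetY, stepNext] at htg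
    simp only [degY, List.map_append, List.map_cons, List.map_nil, List.sum_append,
      List.sum_cons, stepDeg] at hdg
    have h2 : IsPathFromY N i j k (A ++ [BStep.flip, BStep.down] ++ B) := by
      refine ⟨?_, ?_, ?_⟩
      · rw [List.append_assoc, okStepsY_append]
        refine ⟨hA, ?_⟩
        simp only [List.cons_append, List.nil_append, okStepsY, stepNext, ← hv]
        exact ⟨hv1, hv2, by omega, by omega, hB'⟩
      · rw [List.append_assoc, targetY_append]
        simp only [List.cons_append, List.nil_append, targetY, stepNext, ← hv]
        have e : (N : ℤ) + 1 - v - 1 = (N : ℤ) + 1 - (v + 1) := by ring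
        rw [e]; exact htg
      · rw [List.append_assoc, degY_append]
        simp only [degY, List.map_append, List.map_cons, List.map_nil, List.sum_append,
          List.sum_cons, stepDeg]
        omega
    refine ⟨h2, ?_⟩
    apply pathClassY_eq_of_sub_mem
    simp only [cStep]
    exact Submodule.subset_span
      ⟨A, B, Or.inr (Or.inr (Or.inr (Or.inl ⟨h1, h2, hv1, by omega, rfl⟩)))⟩
  | down =>
    simp only [List.cons_append, List.nil_append, okStepsY, stepNext] at hrest
    obtain ⟨hv1, hv2, hw1, hw2, hB⟩ := hrest
    have hB' : okStepsY N ((N : ℤ) + 1 - v + 1) B := by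
      have e : (N : ℤ) + 1 - v + 1 = (N : ℤ) + 1 - (v - 1) := by ring
      rw [e]; exact hB
    simp only [List.cons_append, List.nil_append, targetY, stepNext] at htg
    simp only [degY, List.map_append, List.map_cons, List.map_nil, List.sum_append,
      List.sum_cons, stepDeg] at hdg
    have h2 : IsPathFromY N i j k (A ++ [BStep.flip, BStep.up] ++ B) := by
      refine ⟨?_, ?_, ?_⟩
      · rw [List.append_assoc, okStepsY_append]
        refine ⟨hA, ?_⟩
        simp only [List.cons_append, List.nil_append, okStepsY, stepNext, ← hv]
        exact ⟨hv1, hv2, by omega, by omega, hB'⟩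
      · rw [List.append_assoc, targetY_append]
        simp only [List.cons_append, List.nil_append, targetY, stepNext, ← hv]
        have e : (N : ℤ) + 1 - v + 1 = (N : ℤ) + 1 - (v - 1) := by ring
        rw [e]; exact htg
      · rw [List.append_assoc, degY_append]
        simp only [degY, List.map_append, List.map_cons, List.map_nil, List.sum_append,
          List.sum_cons, stepDeg]
        omega
    refine ⟨h2, ?_⟩
    apply pathClassY_eq_of_sub_mem
    simp only [cStep]
    exact Submodule.subset_span
      ⟨A, B, Or.inr (Or.inr (Or.inr (Or.inr ⟨h1, h2, by omega, hv2, rfl⟩)))⟩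

lemma pathClassY_congr (F : Type*) [Field F] {N : ℕ} {i j : ℤ} {k : ℕ}
    {p q : PathIdxY N i j k} (h : p.1 = q.1) :
    pathClassY F p = pathClassY F q := by
  congr 1
  exact Subtype.ext h

/-- push a flip to the right through a flip-free list -/
lemma push_flip_right (F : Type*) [Field F] {N : ℕ} {i j : ℤ} {k : ℕ}
    (M : List BStep) (hM : ∀ s ∈ M, s ≠ BStep.flip) (A T : List BStep)
    (h1 : IsPathFromY N i j k (A ++ [BStep.flip] ++ M ++ T)) :
    ∃ h2 : IsPathFromY N i j k (A ++ M.map cStep ++ [BStep.flip] ++ T),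
      pathClassY F ⟨_, h1⟩ = pathClassY F (⟨_, h2⟩ : PathIdxY N i j k) := by
  induction M generalizing A with
  | nil =>
      have e : A ++ [BStep.flip] ++ ([] : List BStep) ++ T
          = A ++ List.map cStep [] ++ [BStep.flip] ++ T := by simp
      have h2 : IsPathFromY N i j k (A ++ List.map cStep [] ++ [BStep.flip] ++ T) := by
        rw [← e]; exact h1
      exact ⟨h2, pathClassY_congr F e⟩
  | cons s M' ih =>
      have hs : s ≠ BStep.flip := hM s List.mem_cons_self
      have e1 : A ++ [BStep.flip] ++ (s :: M') ++ T
          = A ++ [BStep.flip, s] ++ (M' ++ T) := by simp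
      have h1' : IsPathFromY N i j k (A ++ [BStep.flip, s] ++ (M' ++ T)) := by
        rw [← e1]; exact h1
      obtain ⟨h2, hc2⟩ := swap_flip_right F A (M' ++ T) s hs h1'
      have e2 : A ++ [cStep s, BStep.flip] ++ (M' ++ T)
          = (A ++ [cStep s]) ++ [BStep.flip] ++ M' ++ T := by simp
      have h2' : IsPathFromY N i j k ((A ++ [cStep s]) ++ [BStep.flip] ++ M' ++ T) := by
        rw [← e2]; exact h2
      obtain ⟨h3, hc3⟩ := ih (fun x hx => hM x (List.mem_cons_of_mem _ hx)) (A ++ [cStep s]) h2'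
      have e3 : (A ++ [cStep s]) ++ M'.map cStep ++ [BStep.flip] ++ T
          = A ++ (List.map cStep (s :: M')) ++ [BStep.flip] ++ T := by simp
      have h3' : IsPathFromY N i j k (A ++ (List.map cStep (s :: M')) ++ [BStep.flip] ++ T) := by
        rw [← e3]; exact h3
      refine ⟨h3', ?_⟩
      calc pathClassY F (⟨A ++ [BStep.flip] ++ (s :: M') ++ T, h1⟩ : PathIdxY N i j k)
          = pathClassY F ⟨A ++ [BStep.flip, s] ++ (M' ++ T), h1'⟩ := pathClassY_congr F e1
        _ = pathClassY F ⟨A ++ [cStep s, BStep.flip] ++ (M' ++ T), h2⟩ := hc2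
        _ = pathClassY F ⟨(A ++ [cStep s]) ++ [BStep.flip] ++ M' ++ T, h2'⟩ :=
            pathClassY_congr F e2
        _ = pathClassY F ⟨(A ++ [cStep s]) ++ M'.map cStep ++ [BStep.flip] ++ T, h3⟩ := hc3
        _ = pathClassY F ⟨A ++ (List.map cStep (s :: M')) ++ [BStep.flip] ++ T, h3'⟩ :=
            pathClassY_congr F e3

/-- normalization of paths relative to a prefix -/
lemma normalize (F : Type*) [Field F] {N : ℕ} {i j : ℤ} {k : ℕ}
    (L A : List BStep) (h : IsPathFromY N i j k (A ++ L)) :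
    ∃ (L' : List BStep) (h' : IsPathFromY N i j k (A ++ L')),
      NormalFormY L' ∧
        pathClassY F ⟨_, h⟩ = pathClassY F (⟨_, h'⟩ : PathIdxY N i j k) := by
  induction L generalizing A with
  | nil => exact ⟨[], h, ⟨false, [], 0, by simp, by simp⟩, rfl⟩
  | cons s L ih =>
      have e0 : A ++ (s :: L) = (A ++ [s]) ++ L := by simp
      have h0 : IsPathFromY N i j k ((A ++ [s]) ++ L) := by rw [← e0]; exact h
      obtain ⟨L', h', hNF, hc⟩ := ih (A ++ [s]) h0
      obtain ⟨a, M, t, hL', hM⟩ := hNF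
      cases a with
      | false =>
          simp only [cond, List.nil_append] at hL'
          have e1 : A ++ (s :: L') = (A ++ [s]) ++ L' := by simp
          have h'' : IsPathFromY N i j k (A ++ (s :: L')) := by rw [e1]; exact h'
          refine ⟨s :: L', h'', ?_, ?_⟩
          · by_cases hsf : s = BStep.flip
            · exact ⟨true, M, t, by simp [hL', hsf], hM⟩
            · refine ⟨false, s :: M, t, by simp [hL'], ?_⟩
              intro x hx
              rcases List.mem_cons.mp hx with hx | hx
              · subst hx; exact hsf
              · exact hM x hx
          · exact (pathClassY_congr F e0).trans (hc.trans (pathClassY_congr F e1.symm))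
      | true =>
          simp only [cond] at hL'
          by_cases hsf : s = BStep.flip
          · subst hsf
            have e1 : (A ++ [BStep.flip]) ++ L'
                = (A ++ [BStep.flip]) ++ [BStep.flip] ++ M
                    ++ List.replicate (2 * t) BStep.flip := by simp [hL']
            have h1 : IsPathFromY N i j k ((A ++ [BStep.flip]) ++ [BStep.flip] ++ M
                ++ List.replicate (2 * t) BStep.flip) := by rw [← e1]; exact h'
            obtain ⟨h2, hc2⟩ := push_flip_right F M hM (A ++ [BStep.flip])
              (List.replicate (2 * t) BStep.flip) h1
            have e2 : (A ++ [BStep.flip]) ++ M.map cStep ++ [BStep.flip]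
                  ++ List.replicate (2 * t) BStep.flip
                = A ++ [BStep.flip] ++ M.map cStep
                  ++ ([BStep.flip] ++ List.replicate (2 * t) BStep.flip) := by simp
            have h2' : IsPathFromY N i j k (A ++ [BStep.flip] ++ M.map cStep
                ++ ([BStep.flip] ++ List.replicate (2 * t) BStep.flip)) := by
              rw [← e2]; exact h2
            obtain ⟨h3, hc3⟩ := push_flip_right F (M.map cStep)
              (fun x hx => by
                rcases List.mem_map.mp hx with ⟨y, hy, rfl⟩
                exact cStep_ne_flip (hM y hy)) A
              ([BStep.flip] ++ List.replicate (2 * t) BStep.flip) h2'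
            have emap : (M.map cStep).map cStep = M := by
              simp [List.map_map, Function.comp_def, cStep_cStep]
            have e3 : A ++ (M.map cStep).map cStep ++ [BStep.flip]
                  ++ ([BStep.flip] ++ List.replicate (2 * t) BStep.flip)
                = A ++ (M ++ List.replicate (2 * (t + 1)) BStep.flip) := by
              rw [emap, show 2 * (t + 1) = 2 * t + 1 + 1 by ring]
              simp [List.replicate_succ]
            have h3' : IsPathFromY N i j k
                (A ++ (M ++ List.replicate (2 * (t + 1)) BStep.flip)) := by
              rw [← e3]; exact h3
            refine ⟨M ++ List.replicate (2 * (t + 1)) BStep.flip, h3',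
              ⟨false, M, t + 1, by simp, hM⟩, ?_⟩
            calc pathClassY F (⟨A ++ (BStep.flip :: L), h⟩ : PathIdxY N i j k)
                = pathClassY F ⟨(A ++ [BStep.flip]) ++ L, h0⟩ := pathClassY_congr F e0
              _ = pathClassY F ⟨(A ++ [BStep.flip]) ++ L', h'⟩ := hc
              _ = pathClassY F ⟨_, h1⟩ := pathClassY_congr F e1
              _ = pathClassY F ⟨_, h2⟩ := hc2
              _ = pathClassY F ⟨_, h2'⟩ := pathClassY_congr F e2
              _ = pathClassY F ⟨_, h3⟩ := hc3
              _ = pathClassY F ⟨_, h3'⟩ := pathClassY_congr F e3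
          · have e1 : (A ++ [s]) ++ L'
                = A ++ [s, BStep.flip] ++ (M ++ List.replicate (2 * t) BStep.flip) := by
              simp [hL']
            have h1 : IsPathFromY N i j k
                (A ++ [s, BStep.flip] ++ (M ++ List.replicate (2 * t) BStep.flip)) := by
              rw [← e1]; exact h'
            obtain ⟨h2, hc2⟩ := swap_flip_left F A
              (M ++ List.replicate (2 * t) BStep.flip) s hsf h1
            have e2 : A ++ [BStep.flip, cStep s] ++ (M ++ List.replicate (2 * t) BStep.flip)
                = A ++ (BStep.flip :: cStep s :: (M ++ List.replicate (2 * t) BStep.flip)) := by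
              simp
            have h2' : IsPathFromY N i j k
                (A ++ (BStep.flip :: cStep s :: (M ++ List.replicate (2 * t) BStep.flip))) := by
              rw [← e2]; exact h2
            refine ⟨BStep.flip :: cStep s :: (M ++ List.replicate (2 * t) BStep.flip), h2',
              ⟨true, cStep s :: M, t, by simp, ?_⟩, ?_⟩
            · intro x hx
              rcases List.mem_cons.mp hx with hx | hx
              · subst hx; exact cStep_ne_flip hsf
              · exact hM x hx
            · calc pathClassY F (⟨A ++ (s :: L), h⟩ : PathIdxY N i j k)
                  = pathClassY F ⟨(A ++ [s]) ++ L, h0⟩ := pathClassY_congr F e0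
                _ = pathClassY F ⟨(A ++ [s]) ++ L', h'⟩ := hc
                _ = pathClassY F ⟨_, h1⟩ := pathClassY_congr F e1
                _ = pathClassY F ⟨_, h2⟩ := hc2
                _ = pathClassY F ⟨_, h2'⟩ := pathClassY_congr F e2

end Stmt11Aux

/-- Every element of `e_i Γ e_j` homogeneous of degree `k` is a linear combination of
paths in normal form `yᵢᵃ · γ₁ · γ₂`. -/
theorem stmt11 (F : Type*) [Field F] (N : ℕ) (hN : 2 ≤ N) (i j : ℤ)
    (hi : 1 ≤ i) (hiN : i ≤ (N : ℤ)) (hj : 1 ≤ j) (hjN : j ≤ (N : ℤ)) (k : ℕ)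
    (x : PathCompY F N i j k) :
    x ∈ Submodule.span F
      {y : PathCompY F N i j k |
        ∃ p : PathIdxY N i j k, NormalFormY p.1 ∧ y = pathClassY F p} := by
  obtain ⟨f, rfl⟩ := Submodule.Quotient.mk_surjective
    (Submodule.span F (relatorsY F N i j k)) x
  induction f using Finsupp.induction_linear with
  | zero =>
      rw [Submodule.Quotient.mk_zero]
      exact Submodule.zero_mem _
  | add f g hf hg =>
      rw [Submodule.Quotient.mk_add]
      exact Submodule.add_mem _ hf hg
  | single p b =>
      have hp : IsPathFromY N i j k (([] : List BStep) ++ p.1) := p.2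
      obtain ⟨L', h', hNF, hc⟩ := Stmt11Aux.normalize F p.1 [] hp
      have hmk : Submodule.Quotient.mk (p := Submodule.span F (relatorsY F N i j k))
          (Finsupp.single p b) = b • pathClassY F p := by
        rw [show Finsupp.single p b = b • Finsupp.single p (1 : F) by
          rw [Finsupp.smul_single', mul_one]]
        rfl
      rw [hmk]
      refine Submodule.smul_mem _ b (Submodule.subset_span ?_)
      refine ⟨⟨L', h'⟩, hNF, ?_⟩
      have : pathClassY F p = pathClassY F (⟨([] : List BStep) ++ p.1, hp⟩ : PathIdxY N i j k) :=
        Stmt11Aux.pathClassY_congr F rfl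
      exact this.trans hc
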